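/- Let x₀ = t/3^k with k, t ∈ ℕ, k ≥ 1, 0 < t < 3^k, and gcd(t,3) = 1, and let m = 2^γ/(2α+1)^β for natural numbers α, β, γ. Then for every p, q ∈ ℤ and r, s ∈ ℕ, the point (p/2^r, q/2^s) does not lie on the line y = m(x − x₀). -/

import Mathlib

/-- Let `x₀ = t / 3^k` with `k ≥ 1`, `0 < t < 3^k`, `gcd(t,3) = 1`, and let
`m = 2^γ / (2α+1)^β` for natural numbers `α, β, γ`. Then no dyadic point
`(p / 2^r, q / 2^s)` with `p, q ∈ ℤ`, `r, s ∈ ℕ` lies on the line `y = m * (x - x₀)`. -/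
theorem T_fractal_admissible_slopes (k t : ℕ) (hk : 1 ≤ k) (ht0 : 0 < t)
    (ht : t < 3 ^ k) (htcop : Nat.gcd t 3 = 1) (α β γ : ℕ) (m : ℝ)
    (hm : m = (2 : ℝ) ^ γ / ((2 * α + 1 : ℕ) : ℝ) ^ β) :
    ∀ (p q : ℤ) (r s : ℕ),
      (q : ℝ) / 2 ^ s ≠ m * ((p : ℝ) / 2 ^ r - (t : ℝ) / 3 ^ k) := by
  intro p q r s h
  subst hm
  have hn : ((2 * α + 1 : ℕ) : ℝ) ≠ 0 := by positivity
  have h2 : (2 : ℝ) ≠ 0 := by norm_num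
  have h3 : (3 : ℝ) ≠ 0 := by norm_num
  have keyR : (q : ℝ) * (2 * α + 1 : ℕ) ^ β * 2 ^ r * 3 ^ k
      = 2 ^ γ * 2 ^ s * ((p : ℝ) * 3 ^ k - (t : ℝ) * 2 ^ r) := by
    field_simp at h
    push_cast at h ⊢
    linear_combination h
  have key : (q * (2 * α + 1 : ℕ) ^ β * 2 ^ r * 3 ^ k : ℤ)
      = 2 ^ γ * 2 ^ s * (p * 3 ^ k - (t : ℤ) * 2 ^ r) := by
    exact_mod_cast keyR
  have hz := congrArg (Int.cast : ℤ → ZMod 3) key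
  push_cast at hz
  have h3k : ((3 : ZMod 3)) ^ k = 0 := by
    have : (3 : ZMod 3) = 0 := by decide
    rw [this, zero_pow (by omega)]
  rw [h3k] at hz
  simp at hz
  -- hz should now say something like 2^γ * 2^s * (t * 2^r) = 0 in ZMod 3
  have htz : (t : ZMod 3) = 0 := by
    rcases hz with (⟨h0,_⟩|⟨h0,_⟩) | h0 | ⟨h0,_⟩ <;> first | exact h0 | exact absurd h0 (by decide)
  have hdvd : (3 : ℕ) ∣ t := (ZMod.natCast_eq_zero_iff t 3).mp htz
  have h31 : (3 : ℕ) ∣ 1 := htcop ▸ Nat.dvd_gcd hdvd dvd_rfl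
  norm_num at h31
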